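/- Locality of convex programs: if constraint sets C1, C2 satisfy J*(C1) = J*(C1 ∪ C2) < ∞, then for any additional constraint c, J*(C1 ∪ {c}) > J*(C1) if and only if J*(C1 ∪ C2 ∪ {c}) > J*(C1 ∪ C2), assuming each constraint subproblem has a unique minimizer. -/

import Mathlib

def Sat {ι : Type*} {d : ℕ} (X : Set (Fin d → ℝ)) (f : ι → (Fin d → ℝ) → ℝ)
    (S : Set ι) : Set (Fin d → ℝ) :=
  {x ∈ X | ∀ j ∈ S, f j x ≤ 0}

noncomputable def Jstar {ι : Type*} {d : ℕ} (X : Set (Fin d → ℝ)) (a : Fin d → ℝ)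
    (f : ι → (Fin d → ℝ) → ℝ) (S : Set ι) : EReal :=
  sInf ((fun x => ((∑ i, a i * x i : ℝ) : EReal)) '' Sat X f S)

lemma Sat_anti {ι : Type*} {d : ℕ} (X : Set (Fin d → ℝ)) (f : ι → (Fin d → ℝ) → ℝ)
    {S T : Set ι} (h : S ⊆ T) : Sat X f T ⊆ Sat X f S :=
  fun x hx => ⟨hx.1, fun j hj => hx.2 j (h hj)⟩

lemma Jstar_mono {ι : Type*} {d : ℕ} (X : Set (Fin d → ℝ)) (a : Fin d → ℝ)
    (f : ι → (Fin d → ℝ) → ℝ) {S T : Set ι} (h : S ⊆ T) :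
    Jstar X a f S ≤ Jstar X a f T :=
  sInf_le_sInf (Set.image_mono (Sat_anti X f h))

lemma Jstar_le {ι : Type*} {d : ℕ} (X : Set (Fin d → ℝ)) (a : Fin d → ℝ)
    (f : ι → (Fin d → ℝ) → ℝ) {S : Set ι} {x} (hx : x ∈ Sat X f S) :
    Jstar X a f S ≤ ((∑ i, a i * x i : ℝ) : EReal) :=
  sInf_le ⟨x, hx, rfl⟩

lemma nonempty_of_Jstar_lt_top {ι : Type*} {d : ℕ} (X : Set (Fin d → ℝ)) (a : Fin d → ℝ)
    (f : ι → (Fin d → ℝ) → ℝ) {S : Set ι} (h : Jstar X a f S < ⊤) :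
    (Sat X f S).Nonempty := by
  by_contra hne
  rw [Set.not_nonempty_iff_eq_empty] at hne
  simp [Jstar, hne] at h

lemma Jstar_eq_of_min {ι : Type*} {d : ℕ} (X : Set (Fin d → ℝ)) (a : Fin d → ℝ)
    (f : ι → (Fin d → ℝ) → ℝ) {S : Set ι} {x} (hx : x ∈ Sat X f S)
    (hmin : ∀ y ∈ Sat X f S, (∑ i, a i * x i) ≤ ∑ i, a i * y i) :
    Jstar X a f S = ((∑ i, a i * x i : ℝ) : EReal) := by
  apply le_antisymm (Jstar_le X a f hx)
  apply le_sInf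
  rintro b ⟨y, hy, rfl⟩
  show ((∑ i, a i * x i : ℝ) : EReal) ≤ ((∑ i, a i * y i : ℝ) : EReal)
  exact_mod_cast hmin y hy

theorem locality {ι : Type*} {d : ℕ} (X : Set (Fin d → ℝ)) (a : Fin d → ℝ)
    (f : ι → (Fin d → ℝ) → ℝ) (C C1 C2 : Set ι) (c : ι)
    (hCfin : C.Finite) (hXcp : IsCompact X) (hXcv : Convex ℝ X)
    (hf : ∀ j ∈ C, ConvexOn ℝ Set.univ (f j))
    (h1 : C1 ⊆ C) (h2 : C2 ⊆ C) (hc : c ∈ C)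
    -- unique minimum condition: every feasible subproblem has a unique minimizer
    (humc : ∀ S ⊆ C, (Sat X f S).Nonempty →
      ∃! x, x ∈ Sat X f S ∧ ∀ y ∈ Sat X f S, (∑ i, a i * x i) ≤ ∑ i, a i * y i)
    (heq : Jstar X a f C1 = Jstar X a f (C1 ∪ C2))
    (hfin : Jstar X a f C1 < ⊤) :
    Jstar X a f (C1 ∪ {c}) > Jstar X a f C1 ↔
      Jstar X a f (C1 ∪ C2 ∪ {c}) > Jstar X a f (C1 ∪ C2) := by
  have hne1 : (Sat X f C1).Nonempty := nonempty_of_Jstar_lt_top X a f hfin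
  obtain ⟨x1, ⟨hx1mem, hx1min⟩, hx1uniq⟩ := humc C1 h1 hne1
  have h12sub : C1 ∪ C2 ⊆ C := Set.union_subset h1 h2
  have hne12 : (Sat X f (C1 ∪ C2)).Nonempty :=
    nonempty_of_Jstar_lt_top X a f (heq ▸ hfin)
  obtain ⟨x12, ⟨hx12mem, hx12min⟩, hx12uniq⟩ := humc (C1 ∪ C2) h12sub hne12
  -- x12 = x1
  have hx12inC1 : x12 ∈ Sat X f C1 := Sat_anti X f Set.subset_union_left hx12mem
  have hobj_eq : (∑ i, a i * x12 i) = ∑ i, a i * x1 i := by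
    have hJ1 := Jstar_eq_of_min X a f hx1mem hx1min
    have hJ12 := Jstar_eq_of_min X a f hx12mem hx12min
    have := heq
    rw [hJ1, hJ12] at this
    exact_mod_cast this.symm
  have hxx : x12 = x1 := by
    apply hx1uniq
    exact ⟨hx12inC1, fun y hy => hobj_eq ▸ hx1min y hy⟩
  -- key equivalence
  have key : ∀ S, S ⊆ C → ∀ x, x ∈ Sat X f S →
      (∀ y ∈ Sat X f S, (∑ i, a i * x i) ≤ ∑ i, a i * y i) →
      (∀ y, (y ∈ Sat X f S ∧ ∀ z ∈ Sat X f S, (∑ i, a i * y i) ≤ ∑ i, a i * z i) → y = x) →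
      ((Jstar X a f (S ∪ {c}) = Jstar X a f S) ↔ f c x ≤ 0) := by
    intro S hS x hxmem hxmin hxuniq
    constructor
    · intro hEq
      have hSfin : Jstar X a f S < ⊤ := by
        rw [Jstar_eq_of_min X a f hxmem hxmin]; exact EReal.coe_lt_top _
      have hne : (Sat X f (S ∪ {c})).Nonempty :=
        nonempty_of_Jstar_lt_top X a f (hEq ▸ hSfin)
      obtain ⟨y, ⟨hymem, hymin⟩, -⟩ :=
        humc (S ∪ {c}) (Set.union_subset hS (Set.singleton_subset_iff.mpr hc)) hne
      have hobj : (∑ i, a i * y i) = ∑ i, a i * x i := by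
        have h1' := Jstar_eq_of_min X a f hymem hymin
        have h2' := Jstar_eq_of_min X a f hxmem hxmin
        rw [hEq, h2'] at h1'
        exact_mod_cast h1'.symm
      have hyS : y ∈ Sat X f S := Sat_anti X f Set.subset_union_left hymem
      have hyx : y = x := hxuniq y ⟨hyS, fun z hz => hobj ▸ hxmin z hz⟩
      rw [← hyx]
      exact hymem.2 c (Or.inr rfl)
    · intro hfc
      apply le_antisymm
      · have hxm : x ∈ Sat X f (S ∪ {c}) :=
          ⟨hxmem.1, fun j hj => hj.elim (fun h => hxmem.2 j h) (fun h => h ▸ hfc)⟩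
        calc Jstar X a f (S ∪ {c}) ≤ ((∑ i, a i * x i : ℝ) : EReal) := Jstar_le X a f hxm
          _ = Jstar X a f S := (Jstar_eq_of_min X a f hxmem hxmin).symm
      · exact Jstar_mono X a f Set.subset_union_left
  have k1 := key C1 h1 x1 hx1mem hx1min (fun y hy => hx1uniq y hy)
  have k12 := key (C1 ∪ C2) h12sub x12 hx12mem hx12min (fun y hy => hx12uniq y hy)
  have m1 : Jstar X a f C1 ≤ Jstar X a f (C1 ∪ {c}) :=
    Jstar_mono X a f Set.subset_union_left
  have m12 : Jstar X a f (C1 ∪ C2) ≤ Jstar X a f (C1 ∪ C2 ∪ {c}) :=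
    Jstar_mono X a f Set.subset_union_left
  have e1 : Jstar X a f (C1 ∪ {c}) > Jstar X a f C1 ↔ ¬ f c x1 ≤ 0 := by
    constructor
    · intro h hfc; exact h.ne' (k1.mpr hfc)
    · intro h; exact lt_of_le_of_ne m1 (fun he => h (k1.mp he.symm))
  have e12 : Jstar X a f (C1 ∪ C2 ∪ {c}) > Jstar X a f (C1 ∪ C2) ↔ ¬ f c x12 ≤ 0 := by
    constructor
    · intro h hfc; exact h.ne' (k12.mpr hfc)
    · intro h; exact lt_of_le_of_ne m12 (fun he => h (k12.mp he.symm))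
  rw [e1, e12, hxx]
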